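/- Fix 0 ≤ β < 1. For z = re^{iθ} with 0 ≤ r < 1, the minimum over θ of Re(z/((1-z)(1+βz))) is attained at θ = π and equals (-r + (β-1)r² + βr³)/((1+r)²(1-βr)²). -/

import Mathlib

open Complex

lemma keyre (β r c s : ℝ) (hcs : c ^ 2 + s ^ 2 = 1) :
    (((r : ℂ) * ((c : ℂ) + (s : ℂ) * Complex.I)) /
        ((1 - (r : ℂ) * ((c : ℂ) + (s : ℂ) * Complex.I)) *
          (1 + (β : ℂ) * ((r : ℂ) * ((c : ℂ) + (s : ℂ) * Complex.I))))).re
      = (r * (1 - β * r ^ 2) * c + (β - 1) * r ^ 2) /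
          ((1 - 2 * r * c + r ^ 2) * (1 + 2 * β * r * c + β ^ 2 * r ^ 2)) := by
  set z : ℂ := (r : ℂ) * ((c : ℂ) + (s : ℂ) * Complex.I) with hz
  set w : ℂ := (1 - z) * (1 + (β : ℂ) * z) with hw
  have hzre : z.re = r * c := by simp [hz]
  have hzim : z.im = r * s := by simp [hz]
  have hwre : w.re = (1 - r * c) * (1 + β * (r * c)) + β * (r * s) * (r * s) := by
    simp [hw, hz, Complex.mul_re, Complex.mul_im]; ring
  have hwim : w.im = (1 - r * c) * (β * (r * s)) - r * s * (1 + β * (r * c)) := by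
    simp [hw, hz, Complex.mul_re, Complex.mul_im]; ring
  have hns : Complex.normSq w
      = (1 - 2 * r * c + r ^ 2) * (1 + 2 * β * r * c + β ^ 2 * r ^ 2) := by
    rw [Complex.normSq_apply, hwre, hwim]
    linear_combination (r ^ 2 + 2 * β * r ^ 3 * c + β ^ 2 * r ^ 2 - 2 * β ^ 2 * r ^ 3 * c
      + β ^ 2 * r ^ 4 + β ^ 2 * r ^ 4 * s ^ 2 + β ^ 2 * r ^ 4 * c ^ 2) * hcs
  have hnum : z.re * w.re + z.im * w.im
      = r * (1 - β * r ^ 2) * c + (β - 1) * r ^ 2 := by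
    rw [hzre, hzim, hwre, hwim]
    linear_combination (-r ^ 2 + β * r ^ 2 - β * r ^ 3 * c) * hcs
  rw [Complex.div_re, ← add_div, hns, hnum]

theorem stmt_8 (β r : ℝ) (hβ : 0 ≤ β) (hβ1 : β < 1) (hr : 0 ≤ r) (hr1 : r < 1) :
    (∀ θ : ℝ,
      ((((r : ℂ) * Complex.exp (Real.pi * Complex.I)) /
          ((1 - (r : ℂ) * Complex.exp (Real.pi * Complex.I)) *
            (1 + (β : ℂ) * ((r : ℂ) * Complex.exp (Real.pi * Complex.I))))).re
        ≤ (((r : ℂ) * Complex.exp (θ * Complex.I)) /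
          ((1 - (r : ℂ) * Complex.exp (θ * Complex.I)) *
            (1 + (β : ℂ) * ((r : ℂ) * Complex.exp (θ * Complex.I))))).re)) ∧
    (((r : ℂ) * Complex.exp (Real.pi * Complex.I)) /
        ((1 - (r : ℂ) * Complex.exp (Real.pi * Complex.I)) *
          (1 + (β : ℂ) * ((r : ℂ) * Complex.exp (Real.pi * Complex.I))))).re
      = (-r + (β - 1) * r ^ 2 + β * r ^ 3) / ((1 + r) ^ 2 * (1 - β * r) ^ 2) := by
  have hbr : β * r < 1 := by nlinarith
  have hpi : Complex.exp ((Real.pi : ℂ) * Complex.I)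
      = ((-1 : ℝ) : ℂ) + ((0 : ℝ) : ℂ) * Complex.I := by
    simp [Complex.exp_pi_mul_I]
  have hval : (((r : ℂ) * Complex.exp (Real.pi * Complex.I)) /
        ((1 - (r : ℂ) * Complex.exp (Real.pi * Complex.I)) *
          (1 + (β : ℂ) * ((r : ℂ) * Complex.exp (Real.pi * Complex.I))))).re
      = (r * (1 - β * r ^ 2) * (-1) + (β - 1) * r ^ 2) /
          ((1 - 2 * r * (-1) + r ^ 2) * (1 + 2 * β * r * (-1) + β ^ 2 * r ^ 2)) := by
    rw [hpi]; exact keyre β r (-1) 0 (by norm_num)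
  constructor
  · intro θ
    have hθ : Complex.exp ((θ : ℂ) * Complex.I)
        = ((Real.cos θ : ℝ) : ℂ) + ((Real.sin θ : ℝ) : ℂ) * Complex.I := by
      rw [Complex.exp_mul_I]
      simp [Complex.ofReal_cos, Complex.ofReal_sin]
    rw [hval, hθ, keyre β r (Real.cos θ) (Real.sin θ) (by
      have := Real.sin_sq_add_cos_sq θ; linarith)]
    set c := Real.cos θ
    have hc1 : -1 ≤ c := Real.neg_one_le_cos θ
    have hc2 : c ≤ 1 := Real.cos_le_one θ
    have hbr' : (0:ℝ) < 1 - β * r := by linarith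
    have hQm : (0 : ℝ) < (1 - 2 * r * (-1) + r ^ 2) * (1 + 2 * β * r * (-1) + β ^ 2 * r ^ 2) := by
      have h : (1 - 2 * r * (-1) + r ^ 2) * (1 + 2 * β * r * (-1) + β ^ 2 * r ^ 2)
          = (1 + r) ^ 2 * (1 - β * r) ^ 2 := by ring
      rw [h]; positivity
    have hQc : (0 : ℝ) < (1 - 2 * r * c + r ^ 2) * (1 + 2 * β * r * c + β ^ 2 * r ^ 2) := by
      have h1 : (0 : ℝ) < 1 - 2 * r * c + r ^ 2 := by nlinarith
      have h2 : (0 : ℝ) < 1 + 2 * β * r * c + β ^ 2 * r ^ 2 := by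
        nlinarith [mul_nonneg (mul_nonneg hβ hr) (by linarith : (0:ℝ) ≤ 1 + c),
          sq_nonneg (1 - β * r)]
      positivity
    rw [div_le_div_iff₀ hQm hQc]
    have hid : (r * (1 - β * r ^ 2) * c + (β - 1) * r ^ 2) *
          ((1 - 2 * r * (-1) + r ^ 2) * (1 + 2 * β * r * (-1) + β ^ 2 * r ^ 2))
        - (r * (1 - β * r ^ 2) * (-1) + (β - 1) * r ^ 2) *
          ((1 - 2 * r * c + r ^ 2) * (1 + 2 * β * r * c + β ^ 2 * r ^ 2))
        = (1 + r) * (1 - β * r) * ((c + 1) *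
            (4 * β * r ^ 3 * (1 - c) + r * (1 - r) * (1 + β * r) * (1 - β * r ^ 2))) := by
      ring
    have hnn : (0 : ℝ) ≤ (1 + r) * (1 - β * r) * ((c + 1) *
        (4 * β * r ^ 3 * (1 - c) + r * (1 - r) * (1 + β * r) * (1 - β * r ^ 2))) := by
      have h1 : (0 : ℝ) ≤ 4 * β * r ^ 3 * (1 - c) :=
        mul_nonneg (by positivity) (by linarith)
      have h2 : (0 : ℝ) ≤ r * (1 - r) * (1 + β * r) * (1 - β * r ^ 2) := by
        have : β * r ^ 2 < 1 := by nlinarith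
        have h3 : (0:ℝ) ≤ 1 - β * r ^ 2 := by linarith
        exact mul_nonneg (mul_nonneg (mul_nonneg hr (by linarith)) (by positivity)) h3
      have h4 : (0:ℝ) ≤ c + 1 := by linarith
      exact mul_nonneg (mul_nonneg (by linarith) (by linarith))
        (mul_nonneg h4 (by linarith))
    nlinarith [hid, hnn]
  · rw [hval]
    have hbr' : (0:ℝ) < 1 - β * r := by linarith
    have hne1 : ((1 : ℝ) - 2 * r * (-1) + r ^ 2) * (1 + 2 * β * r * (-1) + β ^ 2 * r ^ 2) ≠ 0 := by
      have h : ((1 : ℝ) - 2 * r * (-1) + r ^ 2) * (1 + 2 * β * r * (-1) + β ^ 2 * r ^ 2)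
          = (1 + r) ^ 2 * (1 - β * r) ^ 2 := by ring
      rw [h]; positivity
    have hne2 : ((1 + r) ^ 2 * (1 - β * r) ^ 2 : ℝ) ≠ 0 := by positivity
    rw [div_eq_div_iff hne1 hne2]
    ring
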